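/- The function Λ(x,y) = (x²+y²) tanh(cos(m·arg(x,y)) / (x²+y²)^{a/2}) (i.e. Λ = r² tanh(r^{−a} cos mθ) in polar coordinates), extended by Λ(0,0) = 0, is C¹ on ℝ² for any 0 < a < 1 and positive integer m; that is, Λ is differentiable at the origin with vanishing gradient and its partial derivatives are continuous at the origin. -/

import Mathlib

open Real

/-- `Λ(x,y) = (x²+y²) tanh(cos(m arg(x,y))/(x²+y²)^{a/2})` extended by `Λ(0,0) = 0`,
i.e. `Λ = r² tanh(r^{-a} cos mθ)` in polar coordinates. -/
noncomputable def LamE (a : ℝ) (m : ℕ) (p : ℝ × ℝ) : ℝ :=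
  if p = 0 then 0
  else (p.1 ^ 2 + p.2 ^ 2) *
    Real.tanh (Real.cos (m * Complex.arg (p.1 + p.2 * Complex.I))
      / (p.1 ^ 2 + p.2 ^ 2) ^ (a / 2))

namespace LamAux

/-- the complex coordinate -/
noncomputable def zc (p : ℝ × ℝ) : ℂ := p.1 + p.2 * Complex.I

@[simp] lemma zc_re (p : ℝ × ℝ) : (zc p).re = p.1 := by simp [zc]

@[simp] lemma zc_im (p : ℝ × ℝ) : (zc p).im = p.2 := by simp [zc]

lemma zc_ne {p : ℝ × ℝ} (hp : p ≠ 0) : zc p ≠ 0 := by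
  intro h
  apply hp
  have h1 : (zc p).re = 0 := by rw [h]; simp
  have h2 : (zc p).im = 0 := by rw [h]; simp
  simp only [zc_re] at h1
  simp only [zc_im] at h2
  exact Prod.ext h1 h2

lemma Q_eq (p : ℝ × ℝ) : p.1 ^ 2 + p.2 ^ 2 = ‖zc p‖ ^ 2 := by
  rw [Complex.sq_norm, Complex.normSq_apply, zc_re, zc_im]; ring

lemma Q_pos {p : ℝ × ℝ} (hp : p ≠ 0) : 0 < p.1 ^ 2 + p.2 ^ 2 := by
  rw [Q_eq]
  have := norm_pos_iff.mpr (zc_ne hp)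
  positivity

lemma abs_tanh_le_one (x : ℝ) : |tanh x| ≤ 1 := by
  rw [abs_le, tanh_eq_sinh_div_cosh]
  have h1 := Real.sinh_lt_cosh x
  have h2 := Real.cosh_pos x
  have h3 : -cosh x < sinh x := by
    have := Real.sinh_lt_cosh (-x)
    rw [Real.sinh_neg, Real.cosh_neg] at this; linarith
  constructor
  · rw [le_div_iff₀ h2]; linarith
  · rw [div_le_iff₀ h2]; linarith

lemma hasDerivAt_tanh (x : ℝ) : HasDerivAt tanh (1 / cosh x ^ 2) x := by
  have h := (Real.hasDerivAt_sinh x).div (Real.hasDerivAt_cosh x) (Real.cosh_pos x).ne'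
  have h2 : (cosh x * cosh x - sinh x * sinh x) / cosh x ^ 2 = 1 / cosh x ^ 2 := by
    have hnum : cosh x * cosh x - sinh x * sinh x = 1 := by
      have := Real.cosh_sq_sub_sinh_sq x
      nlinarith [this]
    rw [hnum]
  rw [h2] at h
  rwa [show tanh = sinh / cosh from funext fun y => tanh_eq_sinh_div_cosh y]

lemma tanh_deriv_bound (x : ℝ) : 1 / cosh x ^ 2 ≤ 1 ∧ 0 < 1 / cosh x ^ 2 := by
  have h1 := Real.one_le_cosh x
  have h2 := Real.cosh_pos x
  constructor
  · rw [div_le_one (by positivity)]; nlinarith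
  · positivity

lemma cos_m_arg (z : ℂ) (hz : z ≠ 0) (m : ℕ) :
    Real.cos (m * z.arg) = (z ^ m).re / ‖z‖ ^ m := by
  have h := Complex.norm_mul_exp_arg_mul_I z
  have h2 : z ^ m = ((‖z‖ ^ m : ℝ) : ℂ) * Complex.exp ((↑((m : ℝ) * z.arg)) * Complex.I) := by
    conv_lhs => rw [← h]
    rw [mul_pow, ← Complex.exp_nat_mul]
    push_cast
    ring_nf
  have h3 : (z ^ m).re = ‖z‖ ^ m * Real.cos (m * z.arg) := by
    rw [h2, Complex.re_ofReal_mul, Complex.exp_ofReal_mul_I_re]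
  rw [h3]
  have hr : ‖z‖ ^ m ≠ 0 := pow_ne_zero _ (norm_ne_zero_iff.mpr hz)
  field_simp

/-- the smooth formula away from the origin -/
noncomputable def gfun (a : ℝ) (m : ℕ) (p : ℝ × ℝ) : ℝ :=
  (p.1 ^ 2 + p.2 ^ 2) *
    Real.tanh ((zc p ^ m).re * (p.1 ^ 2 + p.2 ^ 2) ^ (-((m + a) / 2)))

lemma lamE_eq (a : ℝ) (ha0 : 0 < a) (m : ℕ) {p : ℝ × ℝ} (hp : p ≠ 0) :
    LamE a m p = gfun a m p := by
  have hz := zc_ne hp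
  have hr : 0 < ‖zc p‖ := norm_pos_iff.mpr hz
  set r := ‖zc p‖ with hrdef
  have hQ : p.1 ^ 2 + p.2 ^ 2 = r ^ (2 : ℝ) := by
    rw [Q_eq, ← Real.rpow_natCast r 2]; norm_num
  unfold LamE gfun
  rw [if_neg hp]
  congr 1
  rw [show ((p.1 : ℂ) + p.2 * Complex.I) = zc p from rfl]
  rw [cos_m_arg (zc p) hz m, hQ]
  rw [← Real.rpow_natCast r m]
  rw [← Real.rpow_mul hr.le, ← Real.rpow_mul hr.le]
  rw [div_div, ← Real.rpow_add hr, div_eq_mul_inv, ← Real.rpow_neg hr.le]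
  congr 1
  ring

lemma contDiffAt_gfun (a : ℝ) (m : ℕ) {p : ℝ × ℝ} (hp : p ≠ 0) :
    ContDiffAt ℝ 2 (gfun a m) p := by
  have hQ : ContDiff ℝ 2 (fun q : ℝ × ℝ => q.1 ^ 2 + q.2 ^ 2) :=
    (contDiff_fst.pow 2).add (contDiff_snd.pow 2)
  have hzc : ContDiff ℝ 2 zc := by
    unfold zc
    exact (Complex.ofRealCLM.contDiff.comp contDiff_fst).add
      ((Complex.ofRealCLM.contDiff.comp contDiff_snd).mul contDiff_const)
  have hN : ContDiff ℝ 2 (fun q => (zc q ^ m).re) :=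
    Complex.reCLM.contDiff.comp (hzc.pow m)
  have hrpow : ContDiffAt ℝ 2 (fun q : ℝ × ℝ => (q.1 ^ 2 + q.2 ^ 2) ^ (-((m + a) / 2))) p :=
    (Real.contDiffAt_rpow_const_of_ne (Q_pos hp).ne').comp (g := fun x : ℝ => x ^ (-((m + a) / 2 : ℝ))) p hQ.contDiffAt
  have htanh : ContDiff ℝ 2 tanh := by
    have hfe : tanh = fun x => sinh x / cosh x := funext tanh_eq_sinh_div_cosh
    rw [hfe]
    exact Real.contDiff_sinh.div Real.contDiff_cosh fun x => (Real.cosh_pos x).ne'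
  exact hQ.contDiffAt.mul (htanh.contDiffAt.comp p (hN.contDiffAt.mul hrpow))

set_option maxHeartbeats 1000000 in
lemma key (a : ℝ) (ha0 : 0 < a) (ha1 : a < 1) (m : ℕ) (hm : 1 ≤ m) {p : ℝ × ℝ}
    (hp : p ≠ 0) :
    ∃ L : ℝ × ℝ →L[ℝ] ℝ, HasFDerivAt (LamE a m) L p ∧
      ‖L‖ ≤ (2 * m + 2 * (m + a)) * ‖zc p‖ ^ (1 - a) + 4 * ‖zc p‖ := by
  have hz := zc_ne hp
  have hr : 0 < ‖zc p‖ := norm_pos_iff.mpr hz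
  set r := ‖zc p‖ with hrdef
  have hQpos : 0 < p.1 ^ 2 + p.2 ^ 2 := Q_pos hp
  have hxr : |p.1| ≤ r := by have := Complex.abs_re_le_norm (zc p); rwa [zc_re] at this
  have hyr : |p.2| ≤ r := by have := Complex.abs_im_le_norm (zc p); rwa [zc_im] at this
  -- derivative of Q
  set LQ : ℝ × ℝ →L[ℝ] ℝ :=
    ((2 : ℝ) * p.1) • ContinuousLinearMap.fst ℝ ℝ ℝ +
    ((2 : ℝ) * p.2) • ContinuousLinearMap.snd ℝ ℝ ℝ with hLQdef
  have hQ' : HasFDerivAt (fun q : ℝ × ℝ => q.1 ^ 2 + q.2 ^ 2) LQ p := by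
    have h1 := (hasDerivAt_pow 2 p.1).comp_hasFDerivAt p
      (hasFDerivAt_fst (p := p) : HasFDerivAt Prod.fst (ContinuousLinearMap.fst ℝ ℝ ℝ) p)
    have h2 := (hasDerivAt_pow 2 p.2).comp_hasFDerivAt p
      (hasFDerivAt_snd (p := p) : HasFDerivAt Prod.snd (ContinuousLinearMap.snd ℝ ℝ ℝ) p)
    have h := h1.add h2
    refine h.congr_fderiv ?_
    apply ContinuousLinearMap.ext
    intro v
    simp [hLQdef]
    try ring
  have hLQ : ‖LQ‖ ≤ 4 * r := by
    apply ContinuousLinearMap.opNorm_le_bound _ (by positivity)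
    intro v
    have hv : LQ v = 2 * p.1 * v.1 + 2 * p.2 * v.2 := by simp [hLQdef]; try ring
    rw [Real.norm_eq_abs, hv]
    have e1 : |v.1| ≤ ‖v‖ := norm_fst_le v
    have e2 : |v.2| ≤ ‖v‖ := norm_snd_le v
    calc |2 * p.1 * v.1 + 2 * p.2 * v.2| ≤ |2 * p.1 * v.1| + |2 * p.2 * v.2| := abs_add_le _ _
      _ = 2 * |p.1| * |v.1| + 2 * |p.2| * |v.2| := by rw [abs_mul, abs_mul, abs_mul, abs_mul]; norm_num
      _ ≤ 2 * r * ‖v‖ + 2 * r * ‖v‖ := by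
          apply add_le_add <;> apply mul_le_mul
          all_goals first
            | positivity
            | exact mul_le_mul_of_nonneg_left hxr (by norm_num)
            | exact mul_le_mul_of_nonneg_left hyr (by norm_num)
            | assumption
            | exact abs_nonneg _
            | exact norm_nonneg _
      _ = 4 * r * ‖v‖ := by ring
  -- complex coordinate as CLM
  set φ : ℝ × ℝ →L[ℝ] ℂ := (Complex.equivRealProdCLM.symm : ℝ × ℝ →L[ℝ] ℂ) with hφdef
  have hφeq : ∀ q : ℝ × ℝ, φ q = zc q := by
    intro q
    rw [hφdef]
    apply Complex.ext <;> simp [zc]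
  have hφ : HasFDerivAt zc φ p :=
    (φ.hasFDerivAt (x := p)).congr_of_eventuallyEq
      (Filter.Eventually.of_forall fun q => (hφeq q).symm)
  have hφnorm : ∀ q : ℝ × ℝ, ‖φ q‖ ≤ 2 * ‖q‖ := by
    intro q
    rw [hφeq]
    calc ‖zc q‖ ≤ ‖(q.1 : ℂ)‖ + ‖(q.2 : ℂ) * Complex.I‖ :=
          norm_add_le _ _
      _ = |q.1| + |q.2| := by simp [norm_mul]
      _ ≤ ‖q‖ + ‖q‖ := add_le_add (norm_fst_le q) (norm_snd_le q)
      _ = 2 * ‖q‖ := by ring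
  -- derivative of N = Re (z^m)
  set LN : ℝ × ℝ →L[ℝ] ℝ :=
    Complex.reCLM.comp ((((m : ℂ) * zc p ^ (m - 1)) • φ) : ℝ × ℝ →L[ℝ] ℂ) with hLNdef
  have hN : HasFDerivAt (fun q => (zc q ^ m).re) LN p := by
    have h1 : HasFDerivAt (fun q => zc q ^ m) (((m : ℂ) * zc p ^ (m - 1)) • φ) p :=
      (hasDerivAt_pow m (zc p)).comp_hasFDerivAt p hφ
    exact Complex.reCLM.hasFDerivAt.comp p h1
  have hpow1 : r ^ (m - 1) = r ^ ((m : ℝ) - 1) := by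
    rw [← Real.rpow_natCast r (m - 1), Nat.cast_sub hm, Nat.cast_one]
  have hLN : ‖LN‖ ≤ 2 * (m * r ^ ((m : ℝ) - 1)) := by
    apply ContinuousLinearMap.opNorm_le_bound _ (by positivity)
    intro v
    have e1 : LN v = (((m : ℂ) * zc p ^ (m - 1)) * φ v).re := by
      simp [hLNdef]
    rw [Real.norm_eq_abs, e1]
    calc |(((m : ℂ) * zc p ^ (m - 1)) * φ v).re|
        ≤ ‖((m : ℂ) * zc p ^ (m - 1)) * φ v‖ := Complex.abs_re_le_norm _
      _ = (m : ℝ) * r ^ (m - 1) * ‖φ v‖ := by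
          rw [norm_mul, norm_mul, Complex.norm_natCast, norm_pow]
      _ ≤ (m : ℝ) * r ^ (m - 1) * (2 * ‖v‖) := by
          apply mul_le_mul_of_nonneg_left (hφnorm v) (by positivity)
      _ = 2 * ((m : ℝ) * r ^ ((m : ℝ) - 1)) * ‖v‖ := by rw [hpow1]; ring
  -- exponent
  set e : ℝ := -((m + a) / 2) with hedef
  have hE : HasFDerivAt (fun q : ℝ × ℝ => (q.1 ^ 2 + q.2 ^ 2) ^ e)
      ((e * (p.1 ^ 2 + p.2 ^ 2) ^ (e - 1)) • LQ) p :=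
    (Real.hasDerivAt_rpow_const (Or.inl hQpos.ne')).comp_hasFDerivAt (h₂ := fun x : ℝ => x ^ e) p hQ'
  set Lu : ℝ × ℝ →L[ℝ] ℝ :=
    (zc p ^ m).re • ((e * (p.1 ^ 2 + p.2 ^ 2) ^ (e - 1)) • LQ)
      + ((p.1 ^ 2 + p.2 ^ 2) ^ e) • LN with hLudef
  have hu : HasFDerivAt (fun q => (zc q ^ m).re * (q.1 ^ 2 + q.2 ^ 2) ^ e) Lu p := hN.mul hE
  set up : ℝ := (zc p ^ m).re * (p.1 ^ 2 + p.2 ^ 2) ^ e with hupdef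
  have ht : HasFDerivAt (fun q => tanh ((zc q ^ m).re * (q.1 ^ 2 + q.2 ^ 2) ^ e))
      ((1 / cosh up ^ 2) • Lu) p := (hasDerivAt_tanh up).comp_hasFDerivAt (h₂ := tanh) p hu
  set L : ℝ × ℝ →L[ℝ] ℝ :=
    (p.1 ^ 2 + p.2 ^ 2) • ((1 / cosh up ^ 2) • Lu) + tanh up • LQ with hLdef
  have hg : HasFDerivAt (gfun a m) L p := hQ'.mul ht
  refine ⟨L, hg.congr_of_eventuallyEq
    ((eventually_ne_nhds hp).mono fun q hq => lamE_eq a ha0 m hq), ?_⟩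
  -- norm bound
  have hQr : p.1 ^ 2 + p.2 ^ 2 = r ^ (2 : ℝ) := by
    rw [Q_eq, ← Real.rpow_natCast r 2]; norm_num
  have hNb : |(zc p ^ m).re| ≤ r ^ (m : ℝ) := by
    have h := Complex.abs_re_le_norm (zc p ^ m)
    rw [Real.rpow_natCast]
    rwa [norm_pow] at h
  have hm1 : (1 : ℝ) ≤ m := by exact_mod_cast hm
  have hma : (0 : ℝ) < (m : ℝ) + a := by linarith
  have habs_e : |e| = ((m : ℝ) + a) / 2 := by
    rw [hedef, abs_neg, abs_of_nonneg (by linarith)]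
  have hQe1 : (p.1 ^ 2 + p.2 ^ 2) ^ (e - 1) = r ^ (2 * (e - 1)) := by
    rw [hQr, ← Real.rpow_mul hr.le]
  have hQe : (p.1 ^ 2 + p.2 ^ 2) ^ e = r ^ (2 * e) := by
    rw [hQr, ← Real.rpow_mul hr.le]
  have hcomb1 : r ^ (m : ℝ) * r ^ (2 * (e - 1)) * r = r ^ (-1 - a) := by
    rw [← Real.rpow_add hr, ← Real.rpow_add_one hr.ne']
    congr 1
    rw [hedef]; ring
  have hcomb2 : r ^ (2 * e) * r ^ ((m : ℝ) - 1) = r ^ (-1 - a) := by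
    rw [← Real.rpow_add hr]
    congr 1
    rw [hedef]; ring
  have hLub : ‖Lu‖ ≤ (2 * ((m : ℝ) + a) + 2 * m) * r ^ (-1 - a) := by
    rw [hLudef]
    refine le_trans (norm_add_le _ _) ?_
    have ht1 : ‖(zc p ^ m).re • ((e * (p.1 ^ 2 + p.2 ^ 2) ^ (e - 1)) • LQ)‖
        ≤ 2 * ((m : ℝ) + a) * r ^ (-1 - a) := by
      rw [norm_smul ((zc p ^ m).re) ((e * (p.1 ^ 2 + p.2 ^ 2) ^ (e - 1)) • LQ),
        norm_smul (e * (p.1 ^ 2 + p.2 ^ 2) ^ (e - 1)) LQ,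
        Real.norm_eq_abs, Real.norm_eq_abs, abs_mul, habs_e, hQe1,
        abs_of_nonneg (Real.rpow_nonneg hr.le _)]
      have hstep : |(zc p ^ m).re| * (((m : ℝ) + a) / 2 * r ^ (2 * (e - 1)) * ‖LQ‖)
          ≤ r ^ (m : ℝ) * (((m : ℝ) + a) / 2 * r ^ (2 * (e - 1)) * (4 * r)) := by
        gcongr <;> first | exact hNb | exact hLQ | positivity
      refine le_trans hstep (le_of_eq ?_)
      rw [show r ^ (m : ℝ) * (((m : ℝ) + a) / 2 * r ^ (2 * (e - 1)) * (4 * r))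
            = 2 * ((m : ℝ) + a) * (r ^ (m : ℝ) * r ^ (2 * (e - 1)) * r) by ring, hcomb1]
    have ht2 : ‖((p.1 ^ 2 + p.2 ^ 2) ^ e) • LN‖ ≤ 2 * (m : ℝ) * r ^ (-1 - a) := by
      rw [norm_smul ((p.1 ^ 2 + p.2 ^ 2) ^ e) LN, Real.norm_eq_abs, hQe,
        abs_of_nonneg (Real.rpow_nonneg hr.le _)]
      have hstep : r ^ (2 * e) * ‖LN‖ ≤ r ^ (2 * e) * (2 * ((m : ℝ) * r ^ ((m : ℝ) - 1))) := by
        gcongr <;> first | exact hLN | positivity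
      refine le_trans hstep (le_of_eq ?_)
      rw [show r ^ (2 * e) * (2 * ((m : ℝ) * r ^ ((m : ℝ) - 1)))
            = 2 * (m : ℝ) * (r ^ (2 * e) * r ^ ((m : ℝ) - 1)) by ring, hcomb2]
    linarith
  -- assemble
  have hco := Real.one_le_cosh up
  have hcopos := Real.cosh_pos up
  have hsech1 : 1 / cosh up ^ 2 ≤ 1 := by
    rw [div_le_one (by positivity)]; nlinarith
  have hsech0 : 0 ≤ 1 / cosh up ^ 2 := by positivity
  rw [hLdef]
  refine le_trans (norm_add_le _ _) ?_
  have hb1 : ‖(p.1 ^ 2 + p.2 ^ 2) • ((1 / cosh up ^ 2) • Lu)‖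
      ≤ (2 * (m : ℝ) + 2 * ((m : ℝ) + a)) * r ^ (1 - a) := by
    rw [norm_smul (p.1 ^ 2 + p.2 ^ 2) ((1 / cosh up ^ 2) • Lu),
      norm_smul (1 / cosh up ^ 2) Lu, Real.norm_eq_abs, Real.norm_eq_abs,
      abs_of_nonneg hQpos.le, abs_of_nonneg hsech0, hQr]
    have hstep : r ^ (2 : ℝ) * (1 / cosh up ^ 2 * ‖Lu‖)
        ≤ r ^ (2 : ℝ) * (1 * ((2 * ((m : ℝ) + a) + 2 * m) * r ^ (-1 - a))) := by
      gcongr <;> first | exact hsech1 | exact hLub | exact norm_nonneg _ | positivity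
    refine le_trans hstep (le_of_eq ?_)
    rw [show r ^ (2 : ℝ) * (1 * ((2 * ((m : ℝ) + a) + 2 * m) * r ^ (-1 - a)))
          = (2 * (m : ℝ) + 2 * ((m : ℝ) + a)) * (r ^ (2 : ℝ) * r ^ (-1 - a)) by ring,
      ← Real.rpow_add hr]
    rw [show (2 : ℝ) + (-1 - a) = 1 - a by ring]
  have hb2 : ‖tanh up • LQ‖ ≤ 4 * r := by
    rw [norm_smul (tanh up) LQ, Real.norm_eq_abs]
    calc |tanh up| * ‖LQ‖ ≤ 1 * (4 * r) := by
          apply mul_le_mul (abs_tanh_le_one up) hLQ (norm_nonneg _) (by norm_num)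
      _ = 4 * r := by ring
  push_cast
  linarith

lemma lamE_abs_le (a : ℝ) (m : ℕ) (p : ℝ × ℝ) : |LamE a m p| ≤ p.1 ^ 2 + p.2 ^ 2 := by
  unfold LamE
  split
  · simp; positivity
  · rw [abs_mul]
    have h1 : |p.1 ^ 2 + p.2 ^ 2| = p.1 ^ 2 + p.2 ^ 2 := abs_of_nonneg (by positivity)
    rw [h1]
    have h2 := abs_tanh_le_one
      (Real.cos (m * Complex.arg (p.1 + p.2 * Complex.I)) / (p.1 ^ 2 + p.2 ^ 2) ^ (a / 2))
    have h3 := abs_nonneg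
      (tanh (Real.cos (m * Complex.arg (p.1 + p.2 * Complex.I)) / (p.1 ^ 2 + p.2 ^ 2) ^ (a / 2)))
    nlinarith [sq_nonneg p.1, sq_nonneg p.2]

lemma hzero (a : ℝ) (ha0 : 0 < a) (m : ℕ) : HasFDerivAt (LamE a m) (0 : ℝ × ℝ →L[ℝ] ℝ) 0 := by
  rw [hasFDerivAt_iff_isLittleO_nhds_zero]
  have h0 : LamE a m 0 = 0 := by simp [LamE]
  simp only [zero_add, h0, sub_zero, ContinuousLinearMap.zero_apply]
  rw [Asymptotics.isLittleO_iff]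
  intro c hc
  rw [Metric.eventually_nhds_iff]
  refine ⟨c / 2, by positivity, fun {h} hd => ?_⟩
  rw [dist_zero_right] at hd
  have hb := lamE_abs_le a m h
  have h1 : h.1 ^ 2 + h.2 ^ 2 ≤ 2 * ‖h‖ ^ 2 := by
    have e1 : |h.1| ≤ ‖h‖ := norm_fst_le h
    have e2 : |h.2| ≤ ‖h‖ := norm_snd_le h
    nlinarith [abs_nonneg h.1, abs_nonneg h.2, sq_abs h.1, sq_abs h.2]
  have : ‖LamE a m h‖ ≤ 2 * ‖h‖ ^ 2 := le_trans hb h1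
  calc ‖LamE a m h‖ ≤ 2 * ‖h‖ ^ 2 := this
    _ = (2 * ‖h‖) * ‖h‖ := by ring
    _ ≤ c * ‖h‖ := by
        apply mul_le_mul_of_nonneg_right _ (norm_nonneg h)
        linarith

end LamAux

open LamAux

/-- For `0 < a < 1` and `m ≥ 1`, the extended function `Λ` is `C¹` on all of `ℝ²`,
with vanishing gradient at the origin. -/
theorem LamE_C1 (a : ℝ) (ha0 : 0 < a) (ha1 : a < 1) (m : ℕ) (hm : 1 ≤ m) :
    ContDiff ℝ 1 (LamE a m) ∧ fderiv ℝ (LamE a m) 0 = 0 := by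
  have h0 := hzero a ha0 m
  have hdiff : Differentiable ℝ (LamE a m) := by
    intro p
    by_cases hp : p = 0
    · subst hp; exact h0.differentiableAt
    · exact (key a ha0 ha1 m hm hp).choose_spec.1.differentiableAt
  have hbound : ∀ p : ℝ × ℝ, ‖fderiv ℝ (LamE a m) p‖ ≤
      (2 * m + 2 * (m + a)) * ‖zc p‖ ^ (1 - a) + 4 * ‖zc p‖ := by
    intro p
    by_cases hp : p = 0
    · subst hp
      rw [h0.fderiv]
      have : zc 0 = 0 := by simp [zc]
      rw [this]
      simp [Real.zero_rpow (by linarith : (1 : ℝ) - a ≠ 0)]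
    · obtain ⟨L, hL, hLb⟩ := key a ha0 ha1 m hm hp
      rw [hL.fderiv]
      exact hLb
  have hcont : Continuous (fderiv ℝ (LamE a m)) := by
    rw [continuous_iff_continuousAt]
    intro p
    by_cases hp : p = 0
    · subst hp
      have hf0 : fderiv ℝ (LamE a m) 0 = 0 := h0.fderiv
      unfold ContinuousAt
      rw [hf0]
      apply squeeze_zero_norm hbound
      have habs : Filter.Tendsto (fun p : ℝ × ℝ => ‖zc p‖) (nhds 0) (nhds 0) := by
        have hc : Continuous fun p : ℝ × ℝ => ‖zc p‖ := by
          apply continuous_norm.comp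
          unfold zc
          continuity
        have : ‖zc 0‖ = 0 := by simp [zc]
        exact this ▸ hc.continuousAt
      have hrp : Filter.Tendsto (fun t : ℝ => (2 * m + 2 * (m + a)) * t ^ (1 - a) + 4 * t)
          (nhds 0) (nhds 0) := by
        have h1 : ContinuousAt (fun t : ℝ => t ^ (1 - a)) 0 :=
          Real.continuousAt_rpow_const 0 (1 - a) (Or.inr (by linarith))
        have h2 : ContinuousAt (fun t : ℝ => (2 * m + 2 * (m + a)) * t ^ (1 - a) + 4 * t) 0 :=
          (h1.const_mul _).add (continuousAt_id.const_mul _)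
        have h3 : (2 * (m : ℝ) + 2 * (m + a)) * (0 : ℝ) ^ (1 - a) + 4 * 0 = 0 := by
          rw [Real.zero_rpow (by linarith : (1 : ℝ) - a ≠ 0)]; ring
        have := h2.tendsto
        rw [show ((2 : ℝ) * m + 2 * (m + a)) * (0 : ℝ) ^ (1 - a) + 4 * 0 = 0 from h3] at this
        exact this
      exact hrp.comp habs
    · have hev : LamE a m =ᶠ[nhds p] gfun a m :=
        (eventually_ne_nhds hp).mono fun q hq => lamE_eq a ha0 m hq
      have hg : ContinuousAt (fderiv ℝ (gfun a m)) p := by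
        have := (contDiffAt_gfun a m hp).fderiv_right
          (m := 1) (by norm_num)
        exact this.continuousAt
      have heq : fderiv ℝ (LamE a m) =ᶠ[nhds p] fderiv ℝ (gfun a m) := hev.fderiv
      exact hg.congr heq.symm
  exact ⟨contDiff_one_iff_fderiv.mpr ⟨hdiff, hcont⟩, h0.fderiv⟩
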